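/- Conditional Borel–Cantelli comparison: let (𝒢_n) be a filtration, (ξ_n) a nonnegative, bounded, (𝒢_n)-adapted sequence, (Γ_n)_{n≥1} a sequence of events with Γ_n ∈ 𝒢_n, and set p_{k-1} = P(Γ_k | 𝒢_{k-1}), Φ_n = ∑_{k=1}^{n} ξ_{k-1} 1_{Γ_k}, Φ*_n = ∑_{k=1}^{n} ξ_{k-1} p_{k-1}. Then almost surely, either both lim sup Φ_n and lim sup Φ*_n are finite, or Φ_n/Φ*_n → 1. -/

import Mathlib

open MeasureTheory Filter Finset Topology

lemma kronecker_aux {b u : ℕ → ℝ} (hb1 : ∀ n, (1:ℝ) ≤ b n) (hbm : Monotone b)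
    (hbt : Tendsto b atTop atTop) {c : ℝ}
    (hu : Tendsto (fun n => ∑ k ∈ Finset.range n, u k) atTop (𝓝 c)) :
    Tendsto (fun n => (∑ k ∈ Finset.range (n+1), b k * u k) / b n) atTop (𝓝 0) := by
  have hbne : ∀ n, b n ≠ 0 := fun n => by linarith [hb1 n]
  set s : ℕ → ℝ := fun n => ∑ k ∈ Finset.range n, u k with hs
  set g : ℕ → ℝ := fun k => b (k+1) - b k with hg
  have hg0 : ∀ k, 0 ≤ g k := fun k => sub_nonneg.2 (hbm (Nat.le_succ k))
  have hgsum : ∀ n, ∑ k ∈ Finset.range n, g k = b n - b 0 := fun n =>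
    Finset.sum_range_sub b n
  have hgtop : Tendsto (fun n => ∑ k ∈ Finset.range n, g k) atTop atTop := by
    simp only [hgsum]
    exact tendsto_atTop_add_const_right _ _ hbt
  have hsc : Tendsto (fun k => s (k+1) - c) atTop (𝓝 0) := by
    have := hu.sub_const c
    rw [sub_self] at this
    exact (tendsto_add_atTop_iff_nat 1).2 this
  have hlo : (fun k => g k * (s (k+1) - c)) =o[atTop] g := by
    rw [Asymptotics.isLittleO_iff]
    intro ε hε
    filter_upwards [(NormedAddCommGroup.tendsto_nhds_zero.mp hsc) ε hε] with k hk
    rw [norm_mul]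
    calc ‖g k‖ * ‖s (k+1) - c‖ ≤ ‖g k‖ * ε := by
          exact mul_le_mul_of_nonneg_left hk.le (norm_nonneg _)
      _ = ε * ‖g k‖ := mul_comm _ _
  have hsum := (hlo.sum_range hg0 hgtop).tendsto_div_nhds_zero
  -- hsum : Tendsto (fun n => (∑ k ∈ range n, g k * (s (k+1) - c)) / (∑ k ∈ range n, g k)) atTop (𝓝 0)
  have hB0 : Tendsto (fun n => (b n - b 0) / b n) atTop (𝓝 1) := by
    have h1 : Tendsto (fun n => b 0 * (b n)⁻¹) atTop (𝓝 0) := by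
      simpa using (hbt.inv_tendsto_atTop).const_mul (b 0)
    have := (tendsto_const_nhds (x := (1:ℝ))).sub h1
    rw [sub_zero] at this
    refine this.congr fun n => ?_
    rw [sub_div, div_self (hbne n)]
    ring
  have h1 : Tendsto (fun n => (∑ k ∈ Finset.range n, g k * (s (k+1) - c)) / b n)
      atTop (𝓝 0) := by
    have hev : ∀ᶠ n in atTop, b 0 + 1 ≤ b n := hbt.eventually_ge_atTop (b 0 + 1)
    have := hsum.mul hB0
    rw [zero_mul] at this
    refine this.congr' ?_
    filter_upwards [hev] with n hn
    have hBn : ∑ k ∈ Finset.range n, g k = b n - b 0 := hgsum n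
    have hBne : (b n - b 0) ≠ 0 := by linarith
    rw [hBn]
    field_simp
  -- Abel summation identity
  have habel : ∀ n, ∑ k ∈ Finset.range (n+1), b k * u k
      = b n * s (n+1) - ∑ k ∈ Finset.range n, g k * s (k+1) := by
    intro n
    induction n with
    | zero => simp [hs]
    | succ n ih =>
      rw [Finset.sum_range_succ, ih, Finset.sum_range_succ (fun k => g k * s (k+1))]
      have : s (n+2) = s (n+1) + u (n+1) := by
        simp [hs, Finset.sum_range_succ]
      rw [this]
      simp only [hg]
      ring
  have hgs : ∀ n, ∑ k ∈ Finset.range n, g k * s (k+1)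
      = (∑ k ∈ Finset.range n, g k * (s (k+1) - c)) + c * (b n - b 0) := by
    intro n
    rw [← hgsum n, Finset.mul_sum, ← Finset.sum_add_distrib]
    exact Finset.sum_congr rfl fun k _ => by ring
  have hfinal : Tendsto (fun n => s (n+1)
      - ((∑ k ∈ Finset.range n, g k * (s (k+1) - c)) / b n + c * ((b n - b 0) / b n)))
      atTop (𝓝 0) := by
    have hs1 : Tendsto (fun n => s (n+1)) atTop (𝓝 c) := (tendsto_add_atTop_iff_nat 1).2 hu
    have := hs1.sub (h1.add (hB0.const_mul c))
    simpa using this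
  refine hfinal.congr fun n => ?_
  rw [habel n, hgs n]
  have hb := hbne n
  field_simp

/-- Conditional Borel–Cantelli comparison (Lemma A.1(i) of Tarrès):
with `Φ_n = ∑_{k<n} ξ_k 1_{Γ_{k+1}}` and `Φ*_n = ∑_{k<n} ξ_k P(Γ_{k+1}|𝒢_k)`,
almost surely either both sequences are bounded or their ratio tends to 1. -/
theorem conditional_borel_cantelli_comparison
    {Ω : Type*} {m0 : MeasurableSpace Ω} (μ : Measure Ω) [IsProbabilityMeasure μ]
    (𝒢 : Filtration ℕ m0)
    (ξ : ℕ → Ω → ℝ) (hξa : StronglyAdapted 𝒢 ξ) (hξ0 : ∀ n ω, 0 ≤ ξ n ω)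
    (hξbdd : ∃ C : ℝ, ∀ n ω, ξ n ω ≤ C)
    (Γ : ℕ → Set Ω) (hΓ : ∀ n, MeasurableSet[𝒢 n] (Γ n)) :
    ∀ᵐ ω ∂μ,
      (BddAbove (Set.range fun n : ℕ =>
          ∑ k ∈ Finset.range n, ξ k ω * Set.indicator (Γ (k + 1)) (fun _ => (1 : ℝ)) ω) ∧
       BddAbove (Set.range fun n : ℕ =>
          ∑ k ∈ Finset.range n,
            ξ k ω * (μ[Set.indicator (Γ (k + 1)) (fun _ => (1 : ℝ)) | 𝒢 k]) ω)) ∨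
      Tendsto (fun n : ℕ =>
          (∑ k ∈ Finset.range n, ξ k ω * Set.indicator (Γ (k + 1)) (fun _ => (1 : ℝ)) ω) /
          (∑ k ∈ Finset.range n,
            ξ k ω * (μ[Set.indicator (Γ (k + 1)) (fun _ => (1 : ℝ)) | 𝒢 k]) ω))
        atTop (nhds 1) := by
  classical
  obtain ⟨C0, hC0⟩ := hξbdd
  set C : ℝ := max C0 1 with hC
  have hC1 : (1:ℝ) ≤ C := le_max_right _ _
  have hC0' : (0:ℝ) < C := lt_of_lt_of_le one_pos hC1
  have hξC : ∀ n ω, ξ n ω ≤ C := fun n ω => (hC0 n ω).trans (le_max_left _ _)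
  -- basic objects
  set g : ℕ → Ω → ℝ := fun k => Set.indicator (Γ (k+1)) (fun _ => (1:ℝ)) with hgdef
  set p : ℕ → Ω → ℝ := fun k => μ[g k | 𝒢 k] with hpdef
  set q : ℕ → Ω → ℝ := fun k ω => max 0 (min (p k ω) 1) with hqdef
  have hg01 : ∀ k ω, 0 ≤ g k ω ∧ g k ω ≤ 1 := by
    intro k ω
    by_cases h : ω ∈ Γ (k+1) <;> simp [hgdef, Set.indicator_apply, h]
  have hq01 : ∀ k ω, 0 ≤ q k ω ∧ q k ω ≤ 1 := by
    intro k ω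
    constructor
    · exact le_max_left _ _
    · exact max_le (by linarith) (min_le_right _ _)
  -- measurability of g
  have hgmeas : ∀ k, StronglyMeasurable[𝒢 (k+1)] (g k) := fun k =>
    stronglyMeasurable_const.indicator (hΓ (k+1))
  have hgint : ∀ k, Integrable (g k) μ := by
    intro k
    refine (integrable_const (1:ℝ)).mono' (((hgmeas k).mono (𝒢.le _)).aestronglyMeasurable) ?_
    refine ae_of_all _ fun ω => ?_
    rw [Real.norm_eq_abs, abs_of_nonneg (hg01 k ω).1]
    exact (hg01 k ω).2
  have hpq : ∀ k, p k =ᵐ[μ] q k := by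
    intro k
    have h0 : 0 ≤ᵐ[μ] p k := condExp_nonneg (ae_of_all _ fun ω => (hg01 k ω).1)
    have h1 : p k ≤ᵐ[μ] fun _ => (1:ℝ) := by
      have h := condExp_mono (μ := μ) (m := 𝒢 k) (hgint k) (integrable_const (1:ℝ))
        (ae_of_all _ fun ω => (hg01 k ω).2)
      rwa [condExp_const (𝒢.le k)] at h
    filter_upwards [h0, h1] with ω h0ω h1ω
    simp only [Pi.zero_apply] at h0ω
    simp only [hqdef]
    rw [min_eq_left h1ω, max_eq_right h0ω]
  have hqmeas : ∀ k, StronglyMeasurable[𝒢 k] (q k) := fun k =>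
    (measurable_const.max ((stronglyMeasurable_condExp.measurable).min measurable_const)).stronglyMeasurable
  -- sums
  set ψ : ℕ → Ω → ℝ := fun n ω => ∑ k ∈ Finset.range n, ξ k ω * q k ω with hψdef
  set φ : ℕ → Ω → ℝ := fun n ω => ∑ k ∈ Finset.range n, ξ k ω * g k ω with hφdef
  set b : ℕ → Ω → ℝ := fun k ω => 1 + ψ (k+1) ω with hbdef
  set d : ℕ → Ω → ℝ := fun k ω => ξ k ω * g k ω - ξ k ω * q k ω with hddef
  set W : ℕ → Ω → ℝ := fun n ω => ∑ k ∈ Finset.range n, (b k ω)⁻¹ * d k ω with hWdef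
  set M : ℕ → Ω → ℝ := fun n ω => φ n ω - ψ n ω with hMdef
  -- pointwise facts
  have hψ0 : ∀ n ω, 0 ≤ ψ n ω := fun n ω =>
    Finset.sum_nonneg fun k _ => mul_nonneg (hξ0 k ω) (hq01 k ω).1
  have hψmono : ∀ ω, Monotone fun n => ψ n ω := by
    intro ω
    refine monotone_nat_of_le_succ fun n => ?_
    simp only [hψdef, Finset.sum_range_succ]
    have := mul_nonneg (hξ0 n ω) (hq01 n ω).1
    linarith
  have hb1 : ∀ k ω, (1:ℝ) ≤ b k ω := fun k ω => le_add_of_nonneg_right (hψ0 _ ω)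
  have hbpos : ∀ k ω, (0:ℝ) < b k ω := fun k ω => lt_of_lt_of_le one_pos (hb1 k ω)
  have hdabs : ∀ k ω, |d k ω| ≤ C := by
    intro k ω
    rw [abs_le]
    constructor
    · have h1 : ξ k ω * q k ω ≤ C := by
        calc ξ k ω * q k ω ≤ C * 1 :=
          mul_le_mul (hξC k ω) (hq01 k ω).2 (hq01 k ω).1 hC0'.le
        _ = C := mul_one C
      have h2 : 0 ≤ ξ k ω * g k ω := mul_nonneg (hξ0 k ω) (hg01 k ω).1
      simp only [hddef]; linarith
    · have h1 : ξ k ω * g k ω ≤ C := by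
        calc ξ k ω * g k ω ≤ C * 1 :=
          mul_le_mul (hξC k ω) (hg01 k ω).2 (hg01 k ω).1 hC0'.le
        _ = C := mul_one C
      have h2 : 0 ≤ ξ k ω * q k ω := mul_nonneg (hξ0 k ω) (hq01 k ω).1
      simp only [hddef]; linarith
  -- measurability
  have hterm : ∀ k, StronglyMeasurable[𝒢 k] (fun ω => ξ k ω * q k ω) :=
    fun k => (hξa k).mul (hqmeas k)
  have hψsucc : ∀ n, StronglyMeasurable[𝒢 n] (ψ (n+1)) := by
    intro n
    simp only [hψdef]
    refine Finset.stronglyMeasurable_fun_sum _ fun k hk => ?_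
    have hk' : k ≤ n := Nat.lt_succ_iff.mp (Finset.mem_range.mp hk)
    exact (hterm k).mono (𝒢.mono hk')
  have hψadp : ∀ n, StronglyMeasurable[𝒢 n] (ψ n) := by
    intro n
    cases n with
    | zero => simp only [hψdef, Finset.range_zero, Finset.sum_empty]; exact stronglyMeasurable_const
    | succ m => exact (hψsucc m).mono (𝒢.mono (Nat.le_succ m))
  have hbmeas : ∀ k, StronglyMeasurable[𝒢 k] (b k) :=
    fun k => stronglyMeasurable_const.add (hψsucc k)
  have hφadp : ∀ n, StronglyMeasurable[𝒢 n] (φ n) := by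
    intro n
    simp only [hφdef]
    refine Finset.stronglyMeasurable_fun_sum _ fun k hk => ?_
    have hk' : k + 1 ≤ n := Finset.mem_range.mp hk
    exact (((hξa k).mono (𝒢.mono (Nat.le_succ k))).mul (hgmeas k)).mono (𝒢.mono hk')
  have hdmeas : ∀ k, StronglyMeasurable[𝒢 (k+1)] (d k) :=
    fun k => (((hξa k).mono (𝒢.mono (Nat.le_succ k))).mul (hgmeas k)).sub
      ((hterm k).mono (𝒢.mono (Nat.le_succ k)))
  have hWadp : ∀ n, StronglyMeasurable[𝒢 n] (W n) := by
    intro n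
    simp only [hWdef]
    refine Finset.stronglyMeasurable_fun_sum _ fun k hk => ?_
    have hk' : k + 1 ≤ n := Finset.mem_range.mp hk
    exact ((((hbmeas k).measurable.inv.stronglyMeasurable).mono
      (𝒢.mono (Nat.le_succ k))).mul (hdmeas k)).mono (𝒢.mono hk')
  -- integrability helper
  have intbdd : ∀ (f : Ω → ℝ) (K : ℝ), StronglyMeasurable[m0] f → (∀ ω, |f ω| ≤ K) →
      Integrable f μ := by
    intro f K hf hK
    refine (integrable_const K).mono' hf.aestronglyMeasurable (ae_of_all _ fun ω => ?_)
    rw [Real.norm_eq_abs]; exact hK ω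
  have hdint : ∀ k, Integrable (d k) μ :=
    fun k => intbdd _ C ((hdmeas k).mono (𝒢.le _)) (hdabs k)
  have hWabs : ∀ n ω, |W n ω| ≤ n * C := by
    intro n ω
    calc |W n ω| ≤ ∑ k ∈ Finset.range n, |(b k ω)⁻¹ * d k ω| := by
          simp only [hWdef]; exact Finset.abs_sum_le_sum_abs _ _
      _ ≤ ∑ k ∈ Finset.range n, C := by
          refine Finset.sum_le_sum fun k _ => ?_
          rw [abs_mul]
          calc |(b k ω)⁻¹| * |d k ω| ≤ 1 * C := by
                refine mul_le_mul ?_ (hdabs k ω) (abs_nonneg _) one_pos.le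
                rw [abs_of_pos (inv_pos.2 (hbpos k ω))]
                rw [inv_le_one_iff₀]
                right; exact hb1 k ω
            _ = C := one_mul C
      _ = n * C := by rw [Finset.sum_const, Finset.card_range, nsmul_eq_mul]
  have hWint : ∀ n, Integrable (W n) μ :=
    fun n => intbdd _ (n*C) ((hWadp n).mono (𝒢.le _)) (hWabs n)
  have hMabs : ∀ n ω, |M n ω| ≤ n * C := by
    intro n ω
    have : M n ω = ∑ k ∈ Finset.range n, d k ω := by
      simp only [hMdef, hφdef, hψdef, hddef, Finset.sum_sub_distrib]
    rw [this]
    calc |∑ k ∈ Finset.range n, d k ω| ≤ ∑ k ∈ Finset.range n, |d k ω| :=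
          Finset.abs_sum_le_sum_abs _ _
      _ ≤ ∑ k ∈ Finset.range n, C := Finset.sum_le_sum fun k _ => hdabs k ω
      _ = n * C := by rw [Finset.sum_const, Finset.card_range, nsmul_eq_mul]
  have hMint : ∀ n, Integrable (M n) μ :=
    fun n => intbdd _ (n*C) (((hφadp n).sub (hψadp n)).mono (𝒢.le _)) (hMabs n)
  -- conditional expectation of increments
  have hξgint : ∀ k, Integrable (fun ω => ξ k ω * g k ω) μ := by
    intro k
    refine intbdd _ C (((hξa k).mono (𝒢.le _)).mul ((hgmeas k).mono (𝒢.le _))) fun ω => ?_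
    rw [abs_of_nonneg (mul_nonneg (hξ0 k ω) (hg01 k ω).1)]
    calc ξ k ω * g k ω ≤ C * 1 := mul_le_mul (hξC k ω) (hg01 k ω).2 (hg01 k ω).1 hC0'.le
      _ = C := mul_one C
  have hξqint : ∀ k, Integrable (fun ω => ξ k ω * q k ω) μ := by
    intro k
    refine intbdd _ C ((hterm k).mono (𝒢.le _)) fun ω => ?_
    rw [abs_of_nonneg (mul_nonneg (hξ0 k ω) (hq01 k ω).1)]
    calc ξ k ω * q k ω ≤ C * 1 := mul_le_mul (hξC k ω) (hq01 k ω).2 (hq01 k ω).1 hC0'.le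
      _ = C := mul_one C
  have hpull : ∀ k, μ[fun ω => ξ k ω * g k ω | 𝒢 k] =ᵐ[μ] fun ω => ξ k ω * p k ω := by
    intro k
    have h := condExp_stronglyMeasurable_mul_of_bound (𝒢.le k) (hξa k) (hgint k) C
      (ae_of_all _ fun ω => by rw [Real.norm_eq_abs, abs_of_nonneg (hξ0 k ω)]; exact hξC k ω)
    exact h
  have hcd : ∀ k, μ[d k | 𝒢 k] =ᵐ[μ] 0 := by
    intro k
    have hsub : μ[d k | 𝒢 k] =ᵐ[μ]
        μ[fun ω => ξ k ω * g k ω | 𝒢 k] - μ[fun ω => ξ k ω * q k ω | 𝒢 k] := by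
      exact condExp_sub (μ := μ) (m := 𝒢 k) (hξgint k) (hξqint k)
    have hq' : μ[fun ω => ξ k ω * q k ω | 𝒢 k] = fun ω => ξ k ω * q k ω :=
      condExp_of_stronglyMeasurable (𝒢.le k) (hterm k) (hξqint k)
    filter_upwards [hsub, hpull k, hpq k] with ω h1 h2 h3
    rw [Pi.zero_apply, h1, Pi.sub_apply, h2, hq']
    rw [h3]
    ring
  have hdbint : ∀ k, Integrable (fun ω => (b k ω)⁻¹ * d k ω) μ := by
    intro k
    refine intbdd _ C ((((hbmeas k).measurable.inv.stronglyMeasurable).mono (𝒢.le _)).mul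
      ((hdmeas k).mono (𝒢.le _))) fun ω => ?_
    rw [abs_mul, abs_of_pos (inv_pos.2 (hbpos k ω))]
    calc (b k ω)⁻¹ * |d k ω| ≤ 1 * C := by
          refine mul_le_mul ?_ (hdabs k ω) (abs_nonneg _) one_pos.le
          rw [inv_le_one_iff₀]; right; exact hb1 k ω
      _ = C := one_mul C
  have hcd' : ∀ k, μ[fun ω => (b k ω)⁻¹ * d k ω | 𝒢 k] =ᵐ[μ] 0 := by
    intro k
    have h := condExp_stronglyMeasurable_mul_of_bound (𝒢.le k)
      ((hbmeas k).measurable.inv.stronglyMeasurable) (hdint k) 1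
      (ae_of_all _ fun ω => by
        rw [Real.norm_eq_abs, Pi.inv_apply, abs_of_pos (inv_pos.2 (hbpos k ω)), inv_le_one_iff₀]
        right; exact hb1 k ω)
    filter_upwards [h, hcd k] with ω h1 h2
    have h1' : (μ[fun ω => (b k ω)⁻¹ * d k ω|𝒢 k]) ω = (b k ω)⁻¹ * (μ[d k|𝒢 k]) ω := h1
    rw [Pi.zero_apply, h1', h2, Pi.zero_apply, mul_zero]
  -- M and W are martingales
  have hMmart : Martingale M 𝒢 μ := by
    refine martingale_nat (fun n => (hφadp n).sub (hψadp n)) hMint fun n => ?_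
    have hMsucc : M (n+1) = M n + d n := by
      funext ω
      simp only [hMdef, hφdef, hψdef, hddef, Finset.sum_range_succ, Pi.add_apply]
      ring
    rw [hMsucc]
    have h := condExp_add (μ := μ) (m := 𝒢 n) (hMint n) (hdint n)
    have hMn : μ[M n | 𝒢 n] = M n :=
      condExp_of_stronglyMeasurable (𝒢.le n) ((hφadp n).sub (hψadp n)) (hMint n)
    filter_upwards [h, hcd n] with ω h1 h2
    rw [h1, hMn]
    simp [h2]
  have hWmart : Martingale W 𝒢 μ := by
    refine martingale_nat hWadp hWint fun n => ?_
    have hWsucc : W (n+1) = W n + fun ω => (b n ω)⁻¹ * d n ω := by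
      funext ω
      simp only [hWdef, Finset.sum_range_succ, Pi.add_apply]
    rw [hWsucc]
    have h := condExp_add (μ := μ) (m := 𝒢 n) (hWint n) (hdbint n)
    have hWn : μ[W n | 𝒢 n] = W n :=
      condExp_of_stronglyMeasurable (𝒢.le n) (hWadp n) (hWint n)
    filter_upwards [h, hcd' n] with ω h1 h2
    rw [h1, hWn]
    simp [h2]
  -- core pull-out integral identity
  have core : ∀ (i : ℕ) (h : Ω → ℝ) (K : ℝ), StronglyMeasurable[𝒢 i] h → (∀ ω, |h ω| ≤ K) →
      ∫ ω, h ω * (ξ i ω * g i ω) ∂μ = ∫ ω, h ω * (ξ i ω * q i ω) ∂μ := by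
    intro i h K hSM hK
    have hne : Nonempty Ω := by
      by_contra hcon
      rw [not_nonempty_iff] at hcon
      have h1 : (μ Set.univ) = 1 := measure_univ
      simp [Set.univ_eq_empty_iff.2 hcon] at h1
    have hK0 : 0 ≤ K := le_trans (abs_nonneg _) (hK (Classical.arbitrary Ω))
    have hSMhξ : StronglyMeasurable[𝒢 i] (fun ω => h ω * ξ i ω) := hSM.mul (hξa i)
    have hbound : ∀ᵐ ω ∂μ, ‖h ω * ξ i ω‖ ≤ K * C := by
      refine ae_of_all _ fun ω => ?_
      rw [Real.norm_eq_abs, abs_mul, abs_of_nonneg (hξ0 i ω)]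
      exact mul_le_mul (hK ω) (hξC i ω) (hξ0 i ω) hK0
    have hpull2 := condExp_stronglyMeasurable_mul_of_bound (𝒢.le i) hSMhξ (hgint i)
      (K * C) hbound
    have hint1 : Integrable ((fun ω => h ω * ξ i ω) * g i) μ := by
      refine intbdd _ (K * C) ((hSMhξ.mono (𝒢.le i)).mul ((hgmeas i).mono (𝒢.le _))) fun ω => ?_
      calc |(h ω * ξ i ω) * g i ω| ≤ |h ω * ξ i ω| * 1 := by
            rw [abs_mul (h ω * ξ i ω)]
            refine mul_le_mul_of_nonneg_left ?_ (abs_nonneg _)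
            rw [abs_of_nonneg (hg01 i ω).1]; exact (hg01 i ω).2
        _ = |h ω| * |ξ i ω| := by rw [mul_one, abs_mul]
        _ ≤ K * C := by
            rw [abs_of_nonneg (hξ0 i ω)]
            exact mul_le_mul (hK ω) (hξC i ω) (hξ0 i ω) hK0
    calc ∫ ω, h ω * (ξ i ω * g i ω) ∂μ
        = ∫ ω, ((fun ω => h ω * ξ i ω) * g i) ω ∂μ := by
          refine integral_congr_ae (ae_of_all _ fun ω => ?_)
          simp [mul_assoc]
      _ = ∫ ω, (μ[(fun ω => h ω * ξ i ω) * g i | 𝒢 i]) ω ∂μ :=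
          (integral_condExp (𝒢.le i)).symm
      _ = ∫ ω, ((fun ω => h ω * ξ i ω) * μ[g i | 𝒢 i]) ω ∂μ := integral_congr_ae hpull2
      _ = ∫ ω, h ω * (ξ i ω * q i ω) ∂μ := by
          refine integral_congr_ae ?_
          filter_upwards [hpq i] with ω hω
          simp only [hpdef] at hω
          simp only [Pi.mul_apply]
          rw [hω]
          ring
  -- the second-moment bound
  set r : ℕ → Ω → ℝ := fun n ω => (1 + ψ n ω)⁻¹ with hrdef
  have hrpos : ∀ n ω, 0 < r n ω := fun n ω => inv_pos.2 (by linarith [hψ0 n ω])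
  have hrle1 : ∀ n ω, r n ω ≤ 1 := by
    intro n ω
    rw [hrdef, inv_le_one_iff₀]
    right; linarith [hψ0 n ω]
  have hrint : ∀ n, Integrable (r n) μ := by
    intro n
    refine intbdd _ 1 ((stronglyMeasurable_const.add (hψadp n)).measurable.inv.stronglyMeasurable.mono
      (𝒢.le n)) fun ω => ?_
    rw [abs_of_pos (hrpos n ω)]; exact hrle1 n ω
  have hW2int : ∀ n, Integrable (fun ω => (W n ω)^2) μ := by
    intro n
    refine intbdd _ ((n*C)^2) ?_ fun ω => ?_
    · exact (((hWadp n).mono (𝒢.le n)).measurable.pow_const 2).stronglyMeasurable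
    · rw [abs_pow]
      exact pow_le_pow_left₀ (abs_nonneg _) (hWabs n ω) 2
  -- integrability of products
  have hWd'int : ∀ n, Integrable (fun ω => W n ω * ((b n ω)⁻¹ * d n ω)) μ := by
    intro n
    refine intbdd _ (n*C*C) ?_ fun ω => ?_
    · exact ((hWadp n).mono (𝒢.le n)).mul
        ((((hbmeas n).measurable.inv.stronglyMeasurable).mono (𝒢.le n)).mul
          ((hdmeas n).mono (𝒢.le _)))
    · rw [abs_mul]
      have h1 : |(b n ω)⁻¹ * d n ω| ≤ C := by
        rw [abs_mul, abs_of_pos (inv_pos.2 (hbpos n ω))]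
        calc (b n ω)⁻¹ * |d n ω| ≤ 1 * C := by
              refine mul_le_mul ?_ (hdabs n ω) (abs_nonneg _) one_pos.le
              rw [inv_le_one_iff₀]; right; exact hb1 n ω
          _ = C := one_mul C
      exact mul_le_mul (hWabs n ω) h1 (abs_nonneg _)
        (mul_nonneg (Nat.cast_nonneg n) hC0'.le)
  have hd'2int : ∀ n, Integrable (fun ω => ((b n ω)⁻¹ * d n ω)^2) μ := by
    intro n
    refine intbdd _ (C^2) ?_ fun ω => ?_
    · exact (((((hbmeas n).measurable.inv.stronglyMeasurable).mono (𝒢.le n)).mul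
        ((hdmeas n).mono (𝒢.le _))).measurable.pow_const 2).stronglyMeasurable
    · rw [abs_pow]
      refine pow_le_pow_left₀ (abs_nonneg _) ?_ 2
      rw [abs_mul, abs_of_pos (inv_pos.2 (hbpos n ω))]
      calc (b n ω)⁻¹ * |d n ω| ≤ 1 * C := by
            refine mul_le_mul ?_ (hdabs n ω) (abs_nonneg _) one_pos.le
            rw [inv_le_one_iff₀]; right; exact hb1 n ω
        _ = C := one_mul C
  -- cross term is zero
  have hcross : ∀ n, ∫ ω, W n ω * ((b n ω)⁻¹ * d n ω) ∂μ = 0 := by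
    intro n
    have hcore := core n (fun ω => W n ω * (b n ω)⁻¹) (n*C)
      ((hWadp n).mul ((hbmeas n).measurable.inv.stronglyMeasurable)) ?_
    · have hi1 : Integrable (fun ω => (W n ω * (b n ω)⁻¹) * (ξ n ω * g n ω)) μ := by
        refine intbdd _ (n*C*C) ?_ fun ω => ?_
        · exact (((hWadp n).mul ((hbmeas n).measurable.inv.stronglyMeasurable)).mono
            (𝒢.le n)).mul (((hξa n).mono (𝒢.le n)).mul ((hgmeas n).mono (𝒢.le _)))
        · rw [abs_mul]
          refine mul_le_mul ?_ ?_ (abs_nonneg _) (mul_nonneg (Nat.cast_nonneg n) hC0'.le)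
          · rw [abs_mul, abs_of_pos (inv_pos.2 (hbpos n ω))]
            calc |W n ω| * (b n ω)⁻¹ ≤ (n*C) * 1 := by
                  refine mul_le_mul (hWabs n ω) ?_ (inv_pos.2 (hbpos n ω)).le
                    (mul_nonneg (Nat.cast_nonneg n) hC0'.le)
                  rw [inv_le_one_iff₀]; right; exact hb1 n ω
              _ = n*C := mul_one _
          · rw [abs_mul, abs_of_nonneg (hξ0 n ω), abs_of_nonneg (hg01 n ω).1]
            calc ξ n ω * g n ω ≤ C * 1 :=
                  mul_le_mul (hξC n ω) (hg01 n ω).2 (hg01 n ω).1 hC0'.le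
              _ = C := mul_one C
      have hi2 : Integrable (fun ω => (W n ω * (b n ω)⁻¹) * (ξ n ω * q n ω)) μ := by
        refine intbdd _ (n*C*C) ?_ fun ω => ?_
        · exact (((hWadp n).mul ((hbmeas n).measurable.inv.stronglyMeasurable)).mono
            (𝒢.le n)).mul ((hterm n).mono (𝒢.le n))
        · rw [abs_mul]
          refine mul_le_mul ?_ ?_ (abs_nonneg _) (mul_nonneg (Nat.cast_nonneg n) hC0'.le)
          · rw [abs_mul, abs_of_pos (inv_pos.2 (hbpos n ω))]
            calc |W n ω| * (b n ω)⁻¹ ≤ (n*C) * 1 := by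
                  refine mul_le_mul (hWabs n ω) ?_ (inv_pos.2 (hbpos n ω)).le
                    (mul_nonneg (Nat.cast_nonneg n) hC0'.le)
                  rw [inv_le_one_iff₀]; right; exact hb1 n ω
              _ = n*C := mul_one _
          · rw [abs_mul, abs_of_nonneg (hξ0 n ω), abs_of_nonneg (hq01 n ω).1]
            calc ξ n ω * q n ω ≤ C * 1 :=
                  mul_le_mul (hξC n ω) (hq01 n ω).2 (hq01 n ω).1 hC0'.le
              _ = C := mul_one C
      have heq : ∀ ω, W n ω * ((b n ω)⁻¹ * d n ω)
          = (W n ω * (b n ω)⁻¹) * (ξ n ω * g n ω) - (W n ω * (b n ω)⁻¹) * (ξ n ω * q n ω) := by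
        intro ω
        simp only [hddef]
        ring
      calc ∫ ω, W n ω * ((b n ω)⁻¹ * d n ω) ∂μ
          = ∫ ω, ((W n ω * (b n ω)⁻¹) * (ξ n ω * g n ω)
              - (W n ω * (b n ω)⁻¹) * (ξ n ω * q n ω)) ∂μ := by
            exact integral_congr_ae (ae_of_all _ heq)
        _ = (∫ ω, (W n ω * (b n ω)⁻¹) * (ξ n ω * g n ω) ∂μ)
              - ∫ ω, (W n ω * (b n ω)⁻¹) * (ξ n ω * q n ω) ∂μ := integral_sub hi1 hi2
        _ = 0 := by rw [hcore]; ring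
    · intro ω
      rw [abs_mul, abs_of_pos (inv_pos.2 (hbpos n ω))]
      calc |W n ω| * (b n ω)⁻¹ ≤ (n*C) * 1 := by
            refine mul_le_mul (hWabs n ω) ?_ (inv_pos.2 (hbpos n ω)).le
              (mul_nonneg (Nat.cast_nonneg n) hC0'.le)
            rw [inv_le_one_iff₀]; right; exact hb1 n ω
        _ = n*C := mul_one _
  -- bound on square of increment
  have hd'2bound : ∀ n, ∫ ω, ((b n ω)⁻¹ * d n ω)^2 ∂μ
      ≤ 2*C*((∫ ω, r n ω ∂μ) - ∫ ω, r (n+1) ω ∂μ) := by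
    intro n
    have humeas : StronglyMeasurable[𝒢 n] (fun ω => (b n ω)⁻¹ * (b n ω)⁻¹) :=
      ((hbmeas n).measurable.inv.stronglyMeasurable).mul
        ((hbmeas n).measurable.inv.stronglyMeasurable)
    have huabs : ∀ ω, |(b n ω)⁻¹ * (b n ω)⁻¹| ≤ 1 := by
      intro ω
      rw [abs_mul, abs_of_pos (inv_pos.2 (hbpos n ω))]
      have h1 : (b n ω)⁻¹ ≤ 1 := by rw [inv_le_one_iff₀]; right; exact hb1 n ω
      have h2 : (0:ℝ) ≤ (b n ω)⁻¹ := (inv_pos.2 (hbpos n ω)).le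
      calc (b n ω)⁻¹ * (b n ω)⁻¹ ≤ 1 * 1 := mul_le_mul h1 h1 h2 one_pos.le
        _ = 1 := one_mul 1
    have hug : Integrable (fun ω => ((b n ω)⁻¹ * (b n ω)⁻¹) * (ξ n ω * g n ω)) μ := by
      refine intbdd _ C ?_ fun ω => ?_
      · exact (humeas.mono (𝒢.le n)).mul (((hξa n).mono (𝒢.le n)).mul
          ((hgmeas n).mono (𝒢.le _)))
      · rw [abs_mul]
        calc |(b n ω)⁻¹ * (b n ω)⁻¹| * |ξ n ω * g n ω| ≤ 1 * C := by
              refine mul_le_mul (huabs ω) ?_ (abs_nonneg _) one_pos.le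
              rw [abs_mul, abs_of_nonneg (hξ0 n ω), abs_of_nonneg (hg01 n ω).1]
              calc ξ n ω * g n ω ≤ C * 1 :=
                    mul_le_mul (hξC n ω) (hg01 n ω).2 (hg01 n ω).1 hC0'.le
                _ = C := mul_one C
          _ = C := one_mul C
    have huq : Integrable (fun ω => ((b n ω)⁻¹ * (b n ω)⁻¹) * (ξ n ω * q n ω)) μ := by
      refine intbdd _ C ?_ fun ω => ?_
      · exact (humeas.mono (𝒢.le n)).mul ((hterm n).mono (𝒢.le n))
      · rw [abs_mul]
        calc |(b n ω)⁻¹ * (b n ω)⁻¹| * |ξ n ω * q n ω| ≤ 1 * C := by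
              refine mul_le_mul (huabs ω) ?_ (abs_nonneg _) one_pos.le
              rw [abs_mul, abs_of_nonneg (hξ0 n ω), abs_of_nonneg (hq01 n ω).1]
              calc ξ n ω * q n ω ≤ C * 1 :=
                    mul_le_mul (hξC n ω) (hq01 n ω).2 (hq01 n ω).1 hC0'.le
                _ = C := mul_one C
          _ = C := one_mul C
    have hcoreu := core n (fun ω => (b n ω)⁻¹ * (b n ω)⁻¹) 1 humeas huabs
    have hpoint : ∀ ω, ((b n ω)⁻¹ * d n ω)^2
        ≤ C * (((b n ω)⁻¹ * (b n ω)⁻¹) * (ξ n ω * g n ω)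
            + ((b n ω)⁻¹ * (b n ω)⁻¹) * (ξ n ω * q n ω)) := by
      intro ω
      have h1 : d n ω ^ 2 ≤ C * (ξ n ω * g n ω + ξ n ω * q n ω) := by
        have hd : d n ω = ξ n ω * (g n ω - q n ω) := by simp only [hddef]; ring
        rw [hd]
        have hgq : (g n ω - q n ω)^2 ≤ g n ω + q n ω := by
          nlinarith [(hg01 n ω).1, (hg01 n ω).2, (hq01 n ω).1, (hq01 n ω).2]
        have hξn := hξ0 n ω
        have hξCn := hξC n ω
        have e2 : ξ n ω * (g n ω - q n ω)^2 ≤ C * (g n ω + q n ω) :=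
          mul_le_mul hξCn hgq (sq_nonneg _) hC0'.le
        have e3 : ξ n ω * (ξ n ω * (g n ω - q n ω)^2) ≤ ξ n ω * (C * (g n ω + q n ω)) :=
          mul_le_mul_of_nonneg_left e2 hξn
        calc (ξ n ω * (g n ω - q n ω))^2 = ξ n ω * (ξ n ω * (g n ω - q n ω)^2) := by ring
          _ ≤ ξ n ω * (C * (g n ω + q n ω)) := e3
          _ = C * (ξ n ω * g n ω + ξ n ω * q n ω) := by ring
      have h2 : (0:ℝ) ≤ (b n ω)⁻¹ * (b n ω)⁻¹ :=
        mul_nonneg (inv_pos.2 (hbpos n ω)).le (inv_pos.2 (hbpos n ω)).le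
      calc ((b n ω)⁻¹ * d n ω)^2 = ((b n ω)⁻¹ * (b n ω)⁻¹) * (d n ω ^2) := by ring
        _ ≤ ((b n ω)⁻¹ * (b n ω)⁻¹) * (C * (ξ n ω * g n ω + ξ n ω * q n ω)) :=
            mul_le_mul_of_nonneg_left h1 h2
        _ = C * (((b n ω)⁻¹ * (b n ω)⁻¹) * (ξ n ω * g n ω)
            + ((b n ω)⁻¹ * (b n ω)⁻¹) * (ξ n ω * q n ω)) := by ring
    have hpoint2 : ∀ ω, ((b n ω)⁻¹ * (b n ω)⁻¹) * (ξ n ω * q n ω) ≤ r n ω - r (n+1) ω := by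
      intro ω
      have hA : (0:ℝ) < 1 + ψ n ω := by linarith [hψ0 n ω]
      have hB : (0:ℝ) < b n ω := hbpos n ω
      have hAB : 1 + ψ n ω ≤ b n ω := by
        simp only [hbdef]
        have := hψmono ω (Nat.le_succ n)
        linarith
      have hBA : b n ω = (1 + ψ n ω) + ξ n ω * q n ω := by
        simp only [hbdef, hψdef, Finset.sum_range_succ]
        ring
      have ha : (0:ℝ) ≤ ξ n ω * q n ω := mul_nonneg (hξ0 n ω) (hq01 n ω).1
      have hrn : r n ω = (1 + ψ n ω)⁻¹ := rfl
      have hrn1 : r (n+1) ω = (b n ω)⁻¹ := rfl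
      rw [hrn, hrn1]
      have key : (1 + ψ n ω)⁻¹ - (b n ω)⁻¹ = (ξ n ω * q n ω) * ((1 + ψ n ω)⁻¹ * (b n ω)⁻¹) := by
        field_simp
        linarith [hBA]
      rw [key]
      have hle : (b n ω)⁻¹ ≤ (1 + ψ n ω)⁻¹ := by gcongr
      calc ((b n ω)⁻¹ * (b n ω)⁻¹) * (ξ n ω * q n ω)
          = (ξ n ω * q n ω) * ((b n ω)⁻¹ * (b n ω)⁻¹) := by ring
        _ ≤ (ξ n ω * q n ω) * ((1 + ψ n ω)⁻¹ * (b n ω)⁻¹) := by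
            refine mul_le_mul_of_nonneg_left ?_ ha
            exact mul_le_mul_of_nonneg_right hle (inv_pos.2 hB).le
    calc ∫ ω, ((b n ω)⁻¹ * d n ω)^2 ∂μ
        ≤ ∫ ω, C * (((b n ω)⁻¹ * (b n ω)⁻¹) * (ξ n ω * g n ω)
            + ((b n ω)⁻¹ * (b n ω)⁻¹) * (ξ n ω * q n ω)) ∂μ :=
          integral_mono (hd'2int n) ((hug.add huq).const_mul C) hpoint
      _ = C * ((∫ ω, ((b n ω)⁻¹ * (b n ω)⁻¹) * (ξ n ω * g n ω) ∂μ)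
            + ∫ ω, ((b n ω)⁻¹ * (b n ω)⁻¹) * (ξ n ω * q n ω) ∂μ) := by
          rw [integral_const_mul, integral_add hug huq]
      _ = 2*C * ∫ ω, ((b n ω)⁻¹ * (b n ω)⁻¹) * (ξ n ω * q n ω) ∂μ := by
          rw [hcoreu]; ring
      _ ≤ 2*C * ∫ ω, (r n ω - r (n+1) ω) ∂μ := by
          refine mul_le_mul_of_nonneg_left ?_ (by linarith)
          exact integral_mono huq ((hrint n).sub (hrint (n+1))) hpoint2
      _ = 2*C*((∫ ω, r n ω ∂μ) - ∫ ω, r (n+1) ω ∂μ) := by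
          rw [integral_sub (hrint n) (hrint (n+1))]
  -- induction: second moment bound
  have hW2 : ∀ n, (∫ ω, (W n ω)^2 ∂μ) + 2*C*(∫ ω, r n ω ∂μ) ≤ 2*C := by
    intro n
    induction n with
    | zero =>
      have h1 : ∫ ω, (W 0 ω)^2 ∂μ = 0 := by
        simp [hWdef]
      have h2 : ∫ ω, r 0 ω ∂μ = 1 := by
        have : ∀ ω, r 0 ω = 1 := by
          intro ω; simp [hrdef, hψdef]
        rw [integral_congr_ae (ae_of_all _ this)]
        simp
      rw [h1, h2]
      linarith
    | succ n ih =>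
      have hsplit : ∫ ω, (W (n+1) ω)^2 ∂μ = (∫ ω, (W n ω)^2 ∂μ)
          + (2 * ∫ ω, W n ω * ((b n ω)⁻¹ * d n ω) ∂μ)
          + ∫ ω, ((b n ω)⁻¹ * d n ω)^2 ∂μ := by
        have hexp : ∀ ω, (W (n+1) ω)^2 = (W n ω)^2
            + (2 * (W n ω * ((b n ω)⁻¹ * d n ω)) + ((b n ω)⁻¹ * d n ω)^2) := by
          intro ω
          have : W (n+1) ω = W n ω + (b n ω)⁻¹ * d n ω := by
            simp [hWdef, Finset.sum_range_succ]
          rw [this]; ring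
        have hint2a : Integrable (fun ω => 2 * (W n ω * ((b n ω)⁻¹ * d n ω))) μ :=
          (hWd'int n).const_mul 2
        have hint2 : Integrable (fun ω => 2 * (W n ω * ((b n ω)⁻¹ * d n ω))
            + ((b n ω)⁻¹ * d n ω)^2) μ := hint2a.add (hd'2int n)
        rw [integral_congr_ae (ae_of_all _ hexp), integral_add (hW2int n) hint2,
          integral_add hint2a (hd'2int n), integral_const_mul]
        ring
      have h0 := hcross n
      have h1 := hd'2bound n
      rw [hsplit, h0]
      linarith
  have hintr0 : ∀ n, 0 ≤ ∫ ω, r n ω ∂μ :=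
    fun n => integral_nonneg fun ω => (hrpos n ω).le
  have hW2le : ∀ n, ∫ ω, (W n ω)^2 ∂μ ≤ 2*C := by
    intro n
    have := hW2 n
    have := hintr0 n
    nlinarith
  have hWL1 : ∀ n, ∫ ω, |W n ω| ∂μ ≤ C + 1 := by
    intro n
    have hmono : ∀ ω, |W n ω| ≤ ((W n ω)^2 + 1)/2 := by
      intro ω
      nlinarith [sq_nonneg (|W n ω| - 1), sq_abs (W n ω)]
    calc ∫ ω, |W n ω| ∂μ ≤ ∫ ω, ((W n ω)^2 + 1)/2 ∂μ :=
          integral_mono (hWint n).abs (((hW2int n).add (integrable_const 1)).div_const 2) hmono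
      _ = ((∫ ω, (W n ω)^2 ∂μ) + 1)/2 := by
          rw [integral_div, integral_add (hW2int n) (integrable_const 1)]
          simp
      _ ≤ C + 1 := by
          have := hW2le n
          linarith
  have hRb : ∀ n, eLpNorm (W n) 1 μ ≤ (((C+1).toNNReal : NNReal) : ENNReal) := by
    intro n
    rw [eLpNorm_one_eq_lintegral_enorm, ← ofReal_integral_norm_eq_lintegral_enorm (hWint n)]
    calc ENNReal.ofReal (∫ ω, ‖W n ω‖ ∂μ) ≤ ENNReal.ofReal (C+1) := by
          refine ENNReal.ofReal_le_ofReal ?_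
          simpa [Real.norm_eq_abs] using hWL1 n
      _ = (((C+1).toNNReal : NNReal) : ENNReal) := rfl
  have hWtendsto : ∀ᵐ ω ∂μ, ∃ c, Tendsto (fun n => W n ω) atTop (𝓝 c) :=
    hWmart.submartingale.exists_ae_tendsto_of_bdd hRb
  -- a.e. dichotomy for M
  have hMdiff : ∀ᵐ ω ∂μ, ∀ i, |M (i+1) ω - M i ω| ≤ (C.toNNReal : ℝ) := by
    refine ae_of_all _ fun ω i => ?_
    have : M (i+1) ω - M i ω = d i ω := by
      simp only [hMdef, hφdef, hψdef, hddef, Finset.sum_range_succ]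
      ring
    rw [this, Real.coe_toNNReal _ hC0'.le]
    exact hdabs i ω
  have hMiff := hMmart.bddAbove_range_iff_bddBelow_range hMdiff
  have hpq_all : ∀ᵐ ω ∂μ, ∀ k, p k ω = q k ω := ae_all_iff.2 fun k => hpq k
  filter_upwards [hpq_all, hMiff, hWtendsto] with ω hpqω hMiffω hWω
  have hstar : ∀ n, (∑ k ∈ Finset.range n,
      ξ k ω * (μ[Set.indicator (Γ (k + 1)) (fun _ => (1 : ℝ)) | 𝒢 k]) ω) = ψ n ω := by
    intro n
    simp only [hψdef]
    refine Finset.sum_congr rfl fun k _ => ?_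
    rw [show (μ[Set.indicator (Γ (k + 1)) (fun _ => (1 : ℝ)) | 𝒢 k]) ω = p k ω from rfl,
      hpqω k]
  have hΦeq : ∀ n, (∑ k ∈ Finset.range n,
      ξ k ω * Set.indicator (Γ (k + 1)) (fun _ => (1 : ℝ)) ω) = φ n ω := fun n => rfl
  have hφ0 : ∀ n, 0 ≤ φ n ω :=
    fun n => Finset.sum_nonneg fun k _ => mul_nonneg (hξ0 k ω) (hg01 k ω).1
  by_cases hcase : BddAbove (Set.range fun n => ψ n ω)
  · left
    obtain ⟨K, hK⟩ := hcase
    have hψK : ∀ n, ψ n ω ≤ K := fun n => hK ⟨n, rfl⟩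
    have hMbb : BddBelow (Set.range fun n => M n ω) := by
      refine ⟨-K, ?_⟩
      rintro x ⟨n, rfl⟩
      simp only [hMdef]
      linarith [hφ0 n, hψK n]
    obtain ⟨K', hK'⟩ := hMiffω.2 hMbb
    constructor
    · refine ⟨K' + K, ?_⟩
      rintro x ⟨n, rfl⟩
      have h1 : M n ω ≤ K' := hK' ⟨n, rfl⟩
      simp only [hMdef] at h1
      have h2 := hψK n
      show φ n ω ≤ K' + K
      linarith
    · refine ⟨K, ?_⟩
      rintro x ⟨n, rfl⟩
      show (∑ k ∈ Finset.range n,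
        ξ k ω * (μ[Set.indicator (Γ (k + 1)) (fun _ => (1 : ℝ)) | 𝒢 k]) ω) ≤ K
      rw [hstar n]
      exact hψK n
  · right
    have hψtop : Tendsto (fun n => ψ n ω) atTop atTop :=
      tendsto_atTop_atTop_of_monotone' (hψmono ω) hcase
    obtain ⟨c, hc⟩ := hWω
    have hbmono : Monotone fun k => b k ω := by
      intro i j hij
      simp only [hbdef]
      have := hψmono ω (Nat.succ_le_succ hij)
      linarith
    have hbtop : Tendsto (fun k => b k ω) atTop atTop := by
      have h1 : Tendsto (fun k => ψ (k+1) ω) atTop atTop :=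
        hψtop.comp (tendsto_add_atTop_nat 1)
      exact tendsto_atTop_add_const_left _ 1 h1
    have hWsum : Tendsto (fun n => ∑ k ∈ Finset.range n, (b k ω)⁻¹ * d k ω)
        atTop (𝓝 c) := hc
    have hkron := kronecker_aux (fun k => hb1 k ω) hbmono hbtop hWsum
    have hMsum : ∀ n, M n ω = ∑ k ∈ Finset.range n, d k ω := by
      intro n
      simp only [hMdef, hφdef, hψdef, hddef, Finset.sum_sub_distrib]
    have hkron' : Tendsto (fun n => M (n+1) ω / b n ω) atTop (𝓝 0) := by
      refine hkron.congr fun n => ?_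
      congr 1
      rw [hMsum (n+1)]
      refine Finset.sum_congr rfl fun k _ => ?_
      rw [← mul_assoc, mul_inv_cancel₀ (hbpos k ω).ne', one_mul]
    have hkron'' : Tendsto (fun n => M n ω / (1 + ψ n ω)) atTop (𝓝 0) := by
      rw [← tendsto_add_atTop_iff_nat 1]
      exact hkron'
    have hψpos : ∀ᶠ n in atTop, 0 < ψ n ω := hψtop.eventually_gt_atTop 0
    have hratio : Tendsto (fun n => M n ω / ψ n ω) atTop (𝓝 0) := by
      have h1 : Tendsto (fun n => (1 + ψ n ω)/ψ n ω) atTop (𝓝 1) := by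
        have h2 : Tendsto (fun n => (ψ n ω)⁻¹ + 1) atTop (𝓝 (0 + 1)) :=
          (hψtop.inv_tendsto_atTop).add tendsto_const_nhds
        rw [zero_add] at h2
        refine h2.congr' ?_
        filter_upwards [hψpos] with n hn
        rw [add_div, div_self hn.ne']
        ring
      have h3 := hkron''.mul h1
      rw [zero_mul] at h3
      refine h3.congr' ?_
      filter_upwards [hψpos] with n hn
      have hb0 : (0:ℝ) < 1 + ψ n ω := by linarith [hψ0 n ω]
      field_simp
    have hfin : Tendsto (fun n => φ n ω / ψ n ω) atTop (𝓝 1) := by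
      have h1 : Tendsto (fun n => 1 + M n ω / ψ n ω) atTop (𝓝 (1 + 0)) :=
        tendsto_const_nhds.add hratio
      rw [add_zero] at h1
      refine h1.congr' ?_
      filter_upwards [hψpos] with n hn
      have : φ n ω = ψ n ω + M n ω := by simp only [hMdef]; ring
      rw [this, add_div, div_self hn.ne']
    refine hfin.congr fun n => ?_
    rw [hΦeq n, hstar n]
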